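/- Let f = Y^2 - X^3 in ℂ[X,Y] and m = ⟨X,Y⟩. The quotient ℂ[X,Y]/⟨Y^2 - X^3, m^4⟩ has ℂ-dimension 7. -/

import Mathlib

open MvPolynomial

noncomputable section CuspAux

abbrev R2 : Type := MvPolynomial (Fin 2) ℂ

/-- exponent vector (a, b) -/
def sAB (a b : ℕ) : Fin 2 →₀ ℕ := Finsupp.single 0 a + Finsupp.single 1 b

@[simp] lemma sAB_apply0 (a b : ℕ) : sAB a b 0 = a := by
  simp [sAB, Finsupp.single_apply]

@[simp] lemma sAB_apply1 (a b : ℕ) : sAB a b 1 = b := by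
  simp [sAB, Finsupp.single_apply]

lemma eq_sAB (e : Fin 2 →₀ ℕ) : e = sAB (e 0) (e 1) := by
  ext i; fin_cases i <;> simp

lemma sAB_inj {a b a' b' : ℕ} : sAB a b = sAB a' b' ↔ a = a' ∧ b = b' := by
  constructor
  · intro h
    exact ⟨by simpa using DFunLike.congr_fun h 0, by simpa using DFunLike.congr_fun h 1⟩
  · rintro ⟨rfl, rfl⟩; rfl

/-- ideal of polynomials whose coefficients vanish in degrees < n -/
def lowVanish (n : ℕ) : Ideal R2 where
  carrier := {p | ∀ e : Fin 2 →₀ ℕ, e 0 + e 1 < n → coeff e p = 0}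
  add_mem' := by
    intro a b ha hb e he
    rw [coeff_add, ha e he, hb e he, add_zero]
  zero_mem' := by intro e he; simp
  smul_mem' := by
    intro r p hp e he
    rw [smul_eq_mul, coeff_mul]
    apply Finset.sum_eq_zero
    rintro ⟨u, w⟩ huw
    rw [Finset.HasAntidiagonal.mem_antidiagonal] at huw
    have h0 : u 0 + w 0 = e 0 := by rw [← huw]; simp
    have h1 : u 1 + w 1 = e 1 := by rw [← huw]; simp
    have : w 0 + w 1 < n := by omega
    rw [hp w this, mul_zero]

lemma mem_lowVanish {n : ℕ} {p : R2} :
    p ∈ lowVanish n ↔ ∀ e : Fin 2 →₀ ℕ, e 0 + e 1 < n → coeff e p = 0 := Iff.rfl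

lemma lowVanish_mul (a b : ℕ) : lowVanish a * lowVanish b ≤ lowVanish (a + b) := by
  rw [Ideal.mul_le]
  intro r hr s hs e he
  rw [coeff_mul]
  apply Finset.sum_eq_zero
  rintro ⟨u, w⟩ huw
  rw [Finset.HasAntidiagonal.mem_antidiagonal] at huw
  have h0 : u 0 + w 0 = e 0 := by rw [← huw]; simp
  have h1 : u 1 + w 1 = e 1 := by rw [← huw]; simp
  by_cases hu : u 0 + u 1 < a
  · rw [hr u hu, zero_mul]
  · have : w 0 + w 1 < b := by omega
    rw [hs w this, mul_zero]

lemma span_XY_le : Ideal.span ({X 0, X 1} : Set R2) ≤ lowVanish 1 := by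
  rw [Ideal.span_le]
  rintro p (rfl | rfl) <;>
  · intro e he
    rw [coeff_X', if_neg]
    intro h
    have := DFunLike.congr_fun h 0
    have := DFunLike.congr_fun h 1
    simp [Finsupp.single_apply] at *
    omega

lemma span_XY_pow4_le : (Ideal.span ({X 0, X 1} : Set R2)) ^ 4 ≤ lowVanish 4 := by
  calc (Ideal.span ({X 0, X 1} : Set R2)) ^ 4
      ≤ (lowVanish 1) ^ 4 := Ideal.pow_right_mono span_XY_le 4
    _ ≤ lowVanish 4 := by
        rw [show (4 : ℕ) = 2 * 2 from rfl, pow_mul, sq, sq]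
        calc lowVanish 1 * lowVanish 1 * (lowVanish 1 * lowVanish 1)
            ≤ lowVanish 2 * lowVanish 2 :=
              Ideal.mul_mono (lowVanish_mul 1 1) (lowVanish_mul 1 1)
          _ ≤ lowVanish 4 := lowVanish_mul 2 2


lemma monomial_sAB (a b : ℕ) (c : ℂ) :
    (monomial (sAB a b) c : R2) = C c * (X 0 ^ a * X 1 ^ b) := by
  rw [X_pow_eq_monomial, X_pow_eq_monomial, monomial_mul, one_mul, C_mul_monomial, mul_one, sAB]

lemma coeff_mul_f (c : R2) (e : Fin 2 →₀ ℕ) :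
    coeff e (c * (X 1 ^ 2 - X 0 ^ 3)) =
      (if 2 ≤ e 1 then coeff (e - Finsupp.single 1 2) c else 0)
    - (if 3 ≤ e 0 then coeff (e - Finsupp.single 0 3) c else 0) := by
  rw [mul_sub, coeff_sub, X_pow_eq_monomial, X_pow_eq_monomial,
      coeff_mul_monomial', coeff_mul_monomial']
  simp [Finsupp.single_le_iff]

lemma sub1 : sAB 0 2 - Finsupp.single 1 2 = sAB 0 0 := by
  ext i; fin_cases i <;> simp [Finsupp.tsub_apply, sAB, Finsupp.single_apply]

lemma sub2 : sAB 3 0 - Finsupp.single 0 3 = sAB 0 0 := by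
  ext i; fin_cases i <;> simp [Finsupp.tsub_apply, sAB, Finsupp.single_apply]

end CuspAux

/-- For the cusp `f = Y^2 - X^3` in `ℂ[X,Y]` with `m = ⟨X,Y⟩`, the quotient
`ℂ[X,Y]/⟨Y^2 - X^3, m^4⟩` has `ℂ`-dimension 7. -/
theorem length_cusp_subscheme :
    Module.finrank ℂ
      (MvPolynomial (Fin 2) ℂ ⧸
        (Ideal.span ({X 1 ^ 2 - X 0 ^ 3} : Set (MvPolynomial (Fin 2) ℂ)) ⊔
          (Ideal.span ({X 0, X 1} : Set (MvPolynomial (Fin 2) ℂ))) ^ 4)) = 7 := by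
  set m : Ideal R2 := Ideal.span ({X 0, X 1} : Set R2) with hm
  set I : Ideal R2 := Ideal.span ({X 1 ^ 2 - X 0 ^ 3} : Set R2) ⊔ m ^ 4 with hI
  let Q : R2 →ₗ[ℂ] R2 ⧸ I := (Ideal.Quotient.mkₐ ℂ I).toLinearMap
  have hf : (X 1 ^ 2 - X 0 ^ 3 : R2) ∈ I :=
    Ideal.mem_sup_left (Ideal.mem_span_singleton_self _)
  have hXm : (X 0 : R2) ∈ m := Ideal.subset_span (by simp)
  have hYm : (X 1 : R2) ∈ m := Ideal.subset_span (by simp)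
  have Q0 : ∀ p ∈ I, Q p = 0 := by
    intro p hp
    show Ideal.Quotient.mkₐ ℂ I p = 0
    rw [Ideal.Quotient.mkₐ_eq_mk, Ideal.Quotient.eq_zero_iff_mem]
    exact hp
  let D : Fin 7 → (Fin 2 →₀ ℕ) := ![sAB 0 0, sAB 1 0, sAB 0 1, sAB 2 0, sAB 1 1, sAB 3 0, sAB 2 1]
  let v : Fin 7 → R2 ⧸ I := fun i => Q (monomial (D i) 1)
  have hsm : ∀ (d : Fin 2 →₀ ℕ) (c : ℂ), (monomial d c : R2) = c • monomial d (1 : ℂ) := by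
    intro d c; rw [smul_monomial, smul_eq_mul, mul_one]
  -- spanning
  have key : ∀ (a b : ℕ) (c : ℂ),
      Q (monomial (sAB a b) c) ∈ Submodule.span ℂ (Set.range v) := by
    intro a b c
    by_cases h4 : 4 ≤ a + b
    · have hmem : (X 0 ^ a * X 1 ^ b : R2) ∈ m ^ 4 := by
        refine Ideal.pow_le_pow_right h4 ?_
        rw [pow_add]
        exact Ideal.mul_mem_mul (Ideal.pow_mem_pow hXm a) (Ideal.pow_mem_pow hYm b)
      have hQ : Q (monomial (sAB a b) c) = 0 := by
        apply Q0
        rw [monomial_sAB]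
        exact Ideal.mul_mem_left _ _ (Ideal.mem_sup_right hmem)
      rw [hQ]; exact Submodule.zero_mem _
    · have hv : ∀ i : Fin 7, Q (monomial (D i) c) ∈ Submodule.span ℂ (Set.range v) := by
        intro i
        rw [hsm, map_smul]
        exact Submodule.smul_mem _ _ (Submodule.subset_span ⟨i, rfl⟩)
      have hab : a ≤ 3 := by omega
      have hbb : b ≤ 3 := by omega
      interval_cases a <;> interval_cases b
      · exact hv 0
      · exact hv 2
      · -- (0,2): y^2 ≡ x^3
        have hrw : (monomial (sAB 0 2) (1:ℂ) : R2)
            = (X 1 ^ 2 - X 0 ^ 3) + monomial (sAB 3 0) (1:ℂ) := by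
          rw [monomial_sAB, monomial_sAB, map_one, one_mul, one_mul]; ring
        rw [hsm, map_smul, hrw, map_add, Q0 _ hf, zero_add]
        exact Submodule.smul_mem _ _ (Submodule.subset_span ⟨5, rfl⟩)
      · -- (0,3): y^3 = y*f + x^3*y ∈ I
        have hQ : Q (monomial (sAB 0 3) c) = 0 := by
          apply Q0
          have hrw : (monomial (sAB 0 3) c : R2)
              = C c * (X 1 * (X 1 ^ 2 - X 0 ^ 3)) + C c * (X 0 ^ 3 * X 1) := by
            rw [monomial_sAB]; ring
          rw [hrw]
          refine I.add_mem (Ideal.mul_mem_left _ _ (Ideal.mul_mem_left _ _ hf))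
            (Ideal.mul_mem_left _ _ (Ideal.mem_sup_right ?_))
          rw [show (4:ℕ) = 3 + 1 from rfl, pow_succ]
          exact Ideal.mul_mem_mul (Ideal.pow_mem_pow hXm 3) hYm
        rw [hQ]; exact Submodule.zero_mem _
      · exact hv 1
      · exact hv 4
      · -- (1,2): x*y^2 = x*f + x^4 ∈ I
        have hQ : Q (monomial (sAB 1 2) c) = 0 := by
          apply Q0
          have hrw : (monomial (sAB 1 2) c : R2)
              = C c * (X 0 * (X 1 ^ 2 - X 0 ^ 3)) + C c * (X 0 ^ 4) := by
            rw [monomial_sAB]; ring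
          rw [hrw]
          exact I.add_mem (Ideal.mul_mem_left _ _ (Ideal.mul_mem_left _ _ hf))
            (Ideal.mul_mem_left _ _ (Ideal.mem_sup_right (Ideal.pow_mem_pow hXm 4)))
        rw [hQ]; exact Submodule.zero_mem _
      · exact absurd (by norm_num) h4
      · exact hv 3
      · exact hv 6
      · exact absurd (by norm_num) h4
      · exact absurd (by norm_num) h4
      · exact hv 5
      · exact absurd (by norm_num) h4
      · exact absurd (by norm_num) h4
      · exact absurd (by norm_num) h4
  have hspan : ⊤ ≤ Submodule.span ℂ (Set.range v) := by
    rintro x -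
    obtain ⟨p, rfl⟩ := Ideal.Quotient.mkₐ_surjective ℂ I x
    show Q p ∈ Submodule.span ℂ (Set.range v)
    rw [← support_sum_monomial_coeff p, map_sum]
    refine Submodule.sum_mem _ ?_
    intro e _
    rw [eq_sAB e]
    exact key _ _ _
  -- independence
  have hind : LinearIndependent ℂ v := by
    rw [Fintype.linearIndependent_iff]
    intro g hg
    set P : R2 := ∑ i, g i • monomial (D i) (1 : ℂ) with hP
    have hPI : P ∈ I := by
      have hQP : Q P = 0 := by
        rw [hP, map_sum]
        simpa only [map_smul] using hg
      rwa [show Q P = Ideal.Quotient.mk I P from Ideal.Quotient.mkₐ_eq_mk ℂ I ▸ rfl,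
        Ideal.Quotient.eq_zero_iff_mem] at hQP
    obtain ⟨u, hu, w, hw, huw⟩ := Submodule.mem_sup.mp hPI
    obtain ⟨cc, hcc⟩ := Ideal.mem_span_singleton'.mp hu
    have hw4 : ∀ e : Fin 2 →₀ ℕ, e 0 + e 1 < 4 → coeff e w = 0 :=
      fun e he => span_XY_pow4_le hw e he
    have hco : ∀ e : Fin 2 →₀ ℕ, e 0 + e 1 < 4 → coeff e P =
        (if 2 ≤ e 1 then coeff (e - Finsupp.single 1 2) cc else 0)
      - (if 3 ≤ e 0 then coeff (e - Finsupp.single 0 3) cc else 0) := by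
      intro e he
      rw [← huw, coeff_add, hw4 e he, add_zero, ← hcc, coeff_mul_f]
    have hD0 : D 0 = sAB 0 0 := rfl
    have hD1 : D 1 = sAB 1 0 := rfl
    have hD2 : D 2 = sAB 0 1 := rfl
    have hD3 : D 3 = sAB 2 0 := rfl
    have hD4 : D 4 = sAB 1 1 := rfl
    have hD5 : D 5 = sAB 3 0 := rfl
    have hD6 : D 6 = sAB 2 1 := rfl
    have coeffP : ∀ e : Fin 2 →₀ ℕ,
        coeff e P = ∑ i : Fin 7, g i * (if D i = e then 1 else 0) := by
      intro e
      rw [hP, coeff_sum]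
      simp [coeff_smul, coeff_monomial, smul_eq_mul]
    have e0 : g 0 = 0 := by
      have h := hco (sAB 0 0) (by simp)
      rw [coeffP] at h
      simpa [Fin.sum_univ_seven, hD0, hD1, hD2, hD3, hD4, hD5, hD6, sAB_inj] using h
    have e1 : g 1 = 0 := by
      have h := hco (sAB 1 0) (by simp)
      rw [coeffP] at h
      simpa [Fin.sum_univ_seven, hD0, hD1, hD2, hD3, hD4, hD5, hD6, sAB_inj] using h
    have e2 : g 2 = 0 := by
      have h := hco (sAB 0 1) (by simp)
      rw [coeffP] at h
      simpa [Fin.sum_univ_seven, hD0, hD1, hD2, hD3, hD4, hD5, hD6, sAB_inj] using h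
    have e3 : g 3 = 0 := by
      have h := hco (sAB 2 0) (by simp)
      rw [coeffP] at h
      simpa [Fin.sum_univ_seven, hD0, hD1, hD2, hD3, hD4, hD5, hD6, sAB_inj] using h
    have e4 : g 4 = 0 := by
      have h := hco (sAB 1 1) (by simp)
      rw [coeffP] at h
      simpa [Fin.sum_univ_seven, hD0, hD1, hD2, hD3, hD4, hD5, hD6, sAB_inj] using h
    have e6 : g 6 = 0 := by
      have h := hco (sAB 2 1) (by simp)
      rw [coeffP] at h
      simpa [Fin.sum_univ_seven, hD0, hD1, hD2, hD3, hD4, hD5, hD6, sAB_inj] using h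
    have e5 : g 5 = 0 := by
      have h5 := hco (sAB 3 0) (by simp)
      have h2 := hco (sAB 0 2) (by simp)
      rw [coeffP] at h5 h2
      rw [sub2] at h5
      rw [sub1] at h2
      simp [Fin.sum_univ_seven, hD0, hD1, hD2, hD3, hD4, hD5, hD6, sAB_inj] at h5 h2
      rw [h5, ← h2, neg_zero]
    intro i
    fin_cases i
    · exact e0
    · exact e1
    · exact e2
    · exact e3
    · exact e4
    · exact e5
    · exact e6
  have b : Module.Basis (Fin 7) ℂ (R2 ⧸ I) := Module.Basis.mk hind hspan
  rw [Module.finrank_eq_card_basis b, Fintype.card_fin]
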